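/- For n ≥ 2, the number of n-cycles τ in Sₙ with exactly one descent equals (1/n)·∑_{d|n} μ(d)·2^{n/d}. -/

import Mathlib

/-- The set of descent positions of `τ` (positions `i` with `τ i > τ (i+1)`). -/
def descSet {n : ℕ} (τ : Equiv.Perm (Fin n)) : Finset (Fin n) :=
  Finset.univ.filter (fun i => ∃ j : Fin n, (j : ℕ) = (i : ℕ) + 1 ∧ τ j < τ i)

/-- `τ` is an `n`-cycle: it acts as a single cycle on all of `Fin n`. -/
def IsNCycle {n : ℕ} (τ : Equiv.Perm (Fin n)) : Prop :=
  τ.IsCycleOn Set.univ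

namespace Neck


variable {n : ℕ}

/-- `w` is invariant under rotation by `e`. -/
def HasPeriod (w : ZMod n → Bool) (e : ℕ) : Prop :=
  ∀ j : ZMod n, w (j + (e : ZMod n)) = w j

lemma hasPeriod_self (w : ZMod n → Bool) : HasPeriod w n := by
  intro j; simp [ZMod.natCast_self]

/-- The subgroup of rotations fixing `w`. -/
def rotSub (w : ZMod n → Bool) : AddSubgroup (ZMod n) where
  carrier := {g | ∀ j, w (j + g) = w j}
  zero_mem' := by intro j; simp
  add_mem' := by
    intro a b ha hb j
    rw [← add_assoc, hb, ha]
  neg_mem' := by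
    intro a ha j
    have := ha (j + -a)
    rw [add_assoc, neg_add_cancel, add_zero] at this
    exact this.symm

lemma hasPeriod_iff_mem {w : ZMod n → Bool} {e : ℕ} :
    HasPeriod w e ↔ (e : ZMod n) ∈ rotSub w := Iff.rfl

lemma hasPeriod_gcd {w : ZMod n → Bool} {a b : ℕ} (ha : HasPeriod w a) (hb : HasPeriod w b) :
    HasPeriod w (Nat.gcd a b) := by
  rw [hasPeriod_iff_mem] at ha hb ⊢
  have : ((Nat.gcd a b : ℤ) : ZMod n) ∈ rotSub w := by
    rw [Nat.gcd_eq_gcd_ab]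
    push_cast
    have h1 : ((a : ZMod n)) * ((Nat.gcdA a b : ℤ) : ZMod n) ∈ rotSub w := by
      rw [mul_comm, ← zsmul_eq_mul]
      exact AddSubgroup.zsmul_mem _ ha _
    have h2 : ((b : ZMod n)) * ((Nat.gcdB a b : ℤ) : ZMod n) ∈ rotSub w := by
      rw [mul_comm, ← zsmul_eq_mul]
      exact AddSubgroup.zsmul_mem _ hb _
    exact AddSubgroup.add_mem _ h1 h2
  simpa using this

lemma hasPeriod_mul {w : ZMod n → Bool} {d : ℕ} (hd : HasPeriod w d) (m : ℕ) :
    HasPeriod w (m * d) := by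
  rw [hasPeriod_iff_mem] at hd ⊢
  have : (m : ℕ) • ((d : ℕ) : ZMod n) ∈ rotSub w := AddSubgroup.nsmul_mem _ hd _
  simpa [nsmul_eq_mul] using this

section NeZero
variable [NeZero n]

instance decHasPeriod (w : ZMod n → Bool) : DecidablePred (HasPeriod w) := fun _ =>
  inferInstanceAs (Decidable (∀ _, _ = _))

lemma exists_minPerP (w : ZMod n → Bool) : ∃ e, (0 < e ∧ e ∣ n) ∧ HasPeriod w e :=
  ⟨n, ⟨Nat.pos_of_ne_zero (NeZero.ne n), dvd_rfl⟩, hasPeriod_self w⟩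

/-- Minimal period of a word. -/
def minPer (w : ZMod n → Bool) : ℕ := Nat.find (exists_minPerP w)

lemma minPer_pos (w : ZMod n → Bool) : 0 < minPer w := (Nat.find_spec (exists_minPerP w)).1.1
lemma minPer_dvd (w : ZMod n → Bool) : minPer w ∣ n := (Nat.find_spec (exists_minPerP w)).1.2
lemma hasPeriod_minPer (w : ZMod n → Bool) : HasPeriod w (minPer w) :=
  (Nat.find_spec (exists_minPerP w)).2

lemma minPer_dvd_of {w : ZMod n → Bool} {e : ℕ} (he : e ∣ n) (hp : HasPeriod w e) :
    minPer w ∣ e := by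
  set g := Nat.gcd (minPer w) e with hg
  have hgper : HasPeriod w g := hasPeriod_gcd (hasPeriod_minPer w) hp
  have hgdvd : g ∣ n := (Nat.gcd_dvd_left _ _).trans (minPer_dvd w)
  have hgpos : 0 < g := Nat.gcd_pos_of_pos_left _ (minPer_pos w)
  have h1 : minPer w ≤ g := Nat.find_min' (exists_minPerP w) ⟨⟨hgpos, hgdvd⟩, hgper⟩
  have h2 : g ≤ minPer w := Nat.le_of_dvd (minPer_pos w) (Nat.gcd_dvd_left _ _)
  have : g = minPer w := le_antisymm h2 h1
  rw [← this]
  exact Nat.gcd_dvd_right _ _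

end NeZero

/-- A word of length `d` is primitive if its only period dividing `d` is `d`. -/
def Primitive (u : ZMod n → Bool) : Prop :=
  ∀ e, e ∣ n → HasPeriod u e → e = n

lemma primitive_iff_minPer [NeZero n] (w : ZMod n → Bool) :
    Primitive w ↔ minPer w = n := by
  constructor
  · intro h
    exact h _ (minPer_dvd w) (hasPeriod_minPer w)
  · intro h e he hp
    have := minPer_dvd_of he hp
    rw [h] at this
    exact Nat.dvd_antisymm he this


variable {d : ℕ}

def extendW (h : d ∣ n) (u : ZMod d → Bool) : ZMod n → Bool :=
  fun j => u (ZMod.castHom h (ZMod d) j)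

def restrictW (w : ZMod n → Bool) : ZMod d → Bool :=
  fun i => w ((i.val : ℕ) : ZMod n)

lemma cast_val_eq [NeZero n] (j : ZMod n) : ((j.val : ℕ) : ZMod n) = j :=
  ZMod.natCast_rightInverse j

lemma restrict_extend [NeZero d] (h : d ∣ n) (u : ZMod d → Bool) :
    restrictW (n := n) (extendW h u) = u := by
  funext i
  show u (ZMod.castHom h (ZMod d) ((i.val : ℕ) : ZMod n)) = u i
  rw [map_natCast, cast_val_eq]

lemma hasPeriod_extend (h : d ∣ n) {u : ZMod d → Bool} {e : ℕ} (hu : HasPeriod u e) :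
    HasPeriod (extendW h u) e := by
  intro j
  show u (ZMod.castHom h (ZMod d) (j + (e : ZMod n))) = u (ZMod.castHom h (ZMod d) j)
  rw [map_add, map_natCast]
  exact hu _

lemma extend_hasPeriod_d (h : d ∣ n) (u : ZMod d → Bool) : HasPeriod (extendW h u) d :=
  hasPeriod_extend h (hasPeriod_self u)

lemma extend_restrict [NeZero n] [NeZero d] (h : d ∣ n) {w : ZMod n → Bool}
    (hw : HasPeriod w d) : extendW h (restrictW w) = w := by
  funext j
  show w (((ZMod.castHom h (ZMod d) j).val : ℕ) : ZMod n) = w j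
  have h1 : ZMod.castHom h (ZMod d) j = ((j.val : ℕ) : ZMod d) := by
    conv_lhs => rw [← cast_val_eq j]
    rw [map_natCast]
  rw [h1, ZMod.val_natCast]
  have h2 := (hasPeriod_mul (w := w) hw (j.val / d)) (((j.val % d : ℕ) : ZMod n))
  rw [← h2]
  conv_rhs => rw [← cast_val_eq j, ← Nat.mod_add_div j.val d]
  push_cast
  ring_nf

lemma hasPeriod_of_restrict [NeZero n] [NeZero d] (h : d ∣ n) {w : ZMod n → Bool}
    (hw : HasPeriod w d) {e : ℕ} (he : HasPeriod (restrictW (n := n) (d := d) w) e) :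
    HasPeriod w e := by
  have := hasPeriod_extend h he
  rwa [extend_restrict h hw] at this

lemma restrict_primitive [NeZero n] [NeZero d] (h : d ∣ n) {w : ZMod n → Bool}
    (hw : minPer w = d) : Primitive (restrictW (n := n) (d := d) w) := by
  intro e hed hpe
  have hwd : HasPeriod w d := hw ▸ hasPeriod_minPer w
  have : HasPeriod w e := hasPeriod_of_restrict h hwd hpe
  have hdvd : minPer w ∣ e := minPer_dvd_of (hed.trans h) this
  rw [hw] at hdvd
  exact Nat.dvd_antisymm hed hdvd

lemma hasPeriod_of_extend [NeZero n] [NeZero d] (h : d ∣ n) {u : ZMod d → Bool} {e : ℕ}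
    (he : HasPeriod (extendW h u) e) : HasPeriod u e := by
  intro i
  have h1 : u (i + (e : ZMod d)) = extendW h u (((i.val : ℕ) : ZMod n) + (e : ZMod n)) := by
    show _ = u (ZMod.castHom h (ZMod d) _)
    rw [map_add, map_natCast, map_natCast, cast_val_eq]
  have h2 : u i = extendW h u ((i.val : ℕ) : ZMod n) := by
    show _ = u (ZMod.castHom h (ZMod d) _)
    rw [map_natCast, cast_val_eq]
  rw [h1, h2, he _]

lemma minPer_extend [NeZero n] [NeZero d] (h : d ∣ n) {u : ZMod d → Bool}
    (hu : Primitive u) : minPer (extendW h u) = d := by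
  have hper : HasPeriod (extendW h u) d := extend_hasPeriod_d h u
  have hm : minPer (extendW h u) ∣ d := minPer_dvd_of h hper
  have : HasPeriod u (minPer (extendW h u)) :=
    hasPeriod_of_extend h (hasPeriod_minPer _)
  exact hu _ hm this

def classEquiv [NeZero n] [NeZero d] (h : d ∣ n) :
    {w : ZMod n → Bool // minPer w = d} ≃ {u : ZMod d → Bool // Primitive u} where
  toFun w := ⟨restrictW w.1, restrict_primitive h w.2⟩
  invFun u := ⟨extendW h u.1, minPer_extend h u.2⟩
  left_inv := fun ⟨w, hw⟩ => Subtype.ext (extend_restrict h (hw ▸ hasPeriod_minPer w))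
  right_inv := fun ⟨u, hu⟩ => Subtype.ext (restrict_extend h u)


lemma card_fiber [NeZero n] [NeZero d] (h : d ∣ n) :
    (Finset.univ.filter fun w : ZMod n → Bool => minPer w = d).card =
      Nat.card {u : ZMod d → Bool // Primitive u} := by
  classical
  rw [← Fintype.card_subtype, ← Nat.card_eq_fintype_card]
  exact Nat.card_congr (classEquiv h)

lemma sum_card (n : ℕ) (hn : n ≠ 0) :
    ∑ d ∈ n.divisors, (Nat.card {u : ZMod d → Bool // Primitive u}) = 2 ^ n := by
  classical
  haveI : NeZero n := ⟨hn⟩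
  have hfib := Finset.card_eq_sum_card_fiberwise
    (f := minPer) (s := (Finset.univ : Finset (ZMod n → Bool))) (t := n.divisors)
    (fun w _ => Nat.mem_divisors.mpr ⟨minPer_dvd w, hn⟩)
  have hcard : (Finset.univ : Finset (ZMod n → Bool)).card = 2 ^ n := by
    rw [Finset.card_univ, Fintype.card_fun, Fintype.card_bool, ZMod.card]
  rw [hcard] at hfib
  rw [hfib]
  apply Finset.sum_congr rfl
  intro d hd
  obtain ⟨hdvd, -⟩ := Nat.mem_divisors.mp hd
  haveI : NeZero d := ⟨fun h0 => hn (Nat.eq_zero_of_zero_dvd (h0 ▸ hdvd))⟩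
  exact (card_fiber hdvd).symm


section LevelSection

variable {n : ℕ}


variable {n : ℕ}

lemma chain_lt {β : Type*} [Preorder β] (g : ℕ → β) {a b : ℕ} (h : a < b)
    (step : ∀ m, a ≤ m → m + 1 ≤ b → g m < g (m + 1)) : g a < g b := by
  induction b with
  | zero => omega
  | succ b ih =>
    rcases Nat.lt_or_ge a b with h' | h'
    · exact (ih h' (fun m hm hm2 => step m hm (by omega))).trans (step b (by omega) le_rfl)
    · have : a = b := by omega
      subst this
      exact step a le_rfl le_rfl

lemma fin_chain {β : Type*} [Preorder β] (f : Fin n → β) {a b : Fin n} (hab : a < b)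
    (hstep : ∀ (i : Fin n) (hi : (i : ℕ) + 1 < n), a ≤ i → (i : ℕ) < (b : ℕ) →
      f i < f ⟨(i : ℕ) + 1, hi⟩) :
    f a < f b := by
  have key := chain_lt (g := fun m => if h : m < n then f ⟨m, h⟩ else f b)
    (a := (a : ℕ)) (b := (b : ℕ)) hab ?step
  · rw [dif_pos a.isLt, dif_pos b.isLt] at key
    simpa using key
  case step =>
    intro m hm hm2
    have h1 : m < n := by have := b.isLt; omega
    have h2 : m + 1 < n := by have := b.isLt; omega
    rw [dif_pos h1, dif_pos h2]
    exact hstep ⟨m, h1⟩ h2 (by rw [Fin.le_def]; simpa using hm) (by simp only [Fin.val_mk]; omega)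

variable {τ : Equiv.Perm (Fin n)} {k : Fin n}

lemma step_lt (hk : descSet τ = {k}) {i : Fin n} (hik : i ≠ k) (hi : (i : ℕ) + 1 < n) :
    τ i < τ ⟨(i : ℕ) + 1, hi⟩ := by
  have hnd : i ∉ descSet τ := by rw [hk]; simp [hik]
  rw [descSet, Finset.mem_filter] at hnd
  push_neg at hnd
  have h1 := hnd (Finset.mem_univ i) ⟨(i : ℕ) + 1, hi⟩ rfl
  have hne : τ i ≠ τ ⟨(i : ℕ) + 1, hi⟩ := by
    intro h
    have := τ.injective h
    rw [Fin.ext_iff] at this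
    simp at this
  exact lt_of_le_of_ne h1 hne

lemma sameSide_lt (hk : descSet τ = {k}) {a b : Fin n} (hab : a < b)
    (hside : a ≤ k ↔ b ≤ k) : τ a < τ b := by
  apply fin_chain (f := τ) hab
  intro i hi hai hib
  apply step_lt hk _ hi
  rcases le_or_gt a k with hak | hak
  · have hbk : b ≤ k := hside.mp hak
    intro h
    subst h
    rw [Fin.le_def] at hbk
    rw [Fin.lt_def] at hab
    omega
  · intro h
    subst h
    rw [Fin.le_def] at hai
    rw [Fin.lt_def] at hak
    omega

section Cycle

lemma hcF (hc : IsNCycle τ) : τ.IsCycleOn ((Finset.univ : Finset (Fin n)) : Set (Fin n)) := by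
  rw [Finset.coe_univ]; exact hc

lemma pow_apply_eq_self_iff (hc : IsNCycle τ) (a : Fin n) (m : ℕ) :
    (τ ^ m) a = a ↔ n ∣ m := by
  have := (hcF hc).pow_apply_eq (Finset.mem_univ a) (n := m)
  simpa using this

lemma exists_pow_cycle (hc : IsNCycle τ) (a b : Fin n) : ∃ m, (τ ^ m) a = b := by
  obtain ⟨m, _, hm⟩ := (hcF hc).exists_pow_eq (Finset.mem_univ a) (Finset.mem_univ b)
  exact ⟨m, hm⟩

lemma pow_n_eq_one (hc : IsNCycle τ) : τ ^ n = 1 :=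
  Equiv.ext fun a => (pow_apply_eq_self_iff hc a n).mpr dvd_rfl

lemma pow_mod (hc : IsNCycle τ) {a b : ℕ} (hab : a ≡ b [MOD n]) : τ ^ a = τ ^ b := by
  have h1 : orderOf τ ∣ n := orderOf_dvd_of_pow_eq_one (pow_n_eq_one hc)
  exact pow_eq_pow_iff_modEq.mpr (hab.of_dvd h1)

/-- The orbit map. -/
def orb (τ : Equiv.Perm (Fin n)) (r : Fin n) : ZMod n → Fin n := fun j => (τ ^ j.val) r

lemma orb_natCast [NeZero n] (hc : IsNCycle τ) (r : Fin n) (m : ℕ) :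
    orb τ r ((m : ℕ) : ZMod n) = (τ ^ m) r := by
  show (τ ^ (ZMod.val ((m : ℕ) : ZMod n))) r = _
  rw [ZMod.val_natCast]
  exact congrFun (congrArg _ (pow_mod hc (Nat.mod_modEq m n))) r

lemma orb_add_natCast [NeZero n] (hc : IsNCycle τ) (r : Fin n) (j : ZMod n) (m : ℕ) :
    orb τ r (j + (m : ℕ)) = (τ ^ m) (orb τ r j) := by
  have h1 : j + ((m : ℕ) : ZMod n) = (((j.val + m : ℕ)) : ZMod n) := by
    push_cast [cast_val_eq]
    ring
  rw [h1, orb_natCast hc, add_comm, pow_add]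
  rfl

lemma orb_bijective [NeZero n] (hc : IsNCycle τ) (r : Fin n) :
    Function.Bijective (orb τ r) := by
  rw [Fintype.bijective_iff_surjective_and_card]
  constructor
  · intro b
    obtain ⟨m, hm⟩ := exists_pow_cycle hc r b
    exact ⟨(m : ZMod n), by rw [orb_natCast hc, hm]⟩
  · rw [ZMod.card, Fintype.card_fin]

end Cycle

/-- The word attached to `(k, τ, r)`. -/
def wd (k : Fin n) (τ : Equiv.Perm (Fin n)) (r : Fin n) : ZMod n → Bool :=
  fun j => decide (k < (τ ^ j.val) r)

lemma wd_eq (k : Fin n) (τ : Equiv.Perm (Fin n)) (r : Fin n) (j : ZMod n) :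
    wd k τ r j = decide (k < orb τ r j) := rfl


variable {τ : Equiv.Perm (Fin n)} {k : Fin n}

lemma pow_succ_apply (τ : Equiv.Perm (Fin n)) (m : ℕ) (a : Fin n) :
    (τ ^ (m + 1)) a = τ ((τ ^ m) a) := by
  rw [pow_succ']
  rfl

lemma sides_distinct (hk : descSet τ = {k}) (hc : IsNCycle τ) {a b : Fin n} (hab : a ≠ b) :
    ∃ m, ¬(((τ ^ m) a ≤ k) ↔ ((τ ^ m) b ≤ k)) := by
  have aux : ∀ a b : Fin n, a < b → ∃ m, ¬(((τ ^ m) a ≤ k) ↔ ((τ ^ m) b ≤ k)) := by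
    intro a b hab
    by_contra h
    push_neg at h
    have mono : ∀ m, (τ ^ m) a < (τ ^ m) b := by
      intro m
      induction m with
      | zero => simpa using hab
      | succ m ih =>
        rw [pow_succ_apply, pow_succ_apply]
        exact sameSide_lt hk ih (h m)
    have hn0 : 0 < n := by
      rcases Nat.eq_zero_or_pos n with h0 | h0
      · exact absurd (a.isLt) (by omega)
      · exact h0
    obtain ⟨m, hm⟩ := exists_pow_cycle hc a ⟨n - 1, by omega⟩
    have := mono m
    rw [hm] at this
    have h1 := ((τ ^ m) b).isLt
    rw [Fin.lt_def] at this
    simp only [Fin.val_mk] at this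
    omega
  rcases hab.lt_or_gt with h | h
  · exact aux a b h
  · obtain ⟨m, hm⟩ := aux b a h
    exact ⟨m, fun hiff => hm hiff.symm⟩

lemma first_diff (hk : descSet τ = {k}) (hc : IsNCycle τ) {a b : Fin n} (hab : a < b) :
    ∃ m, (∀ m', m' < m → (((τ ^ m') a ≤ k) ↔ ((τ ^ m') b ≤ k))) ∧
      ((τ ^ m) a ≤ k) ∧ ¬((τ ^ m) b ≤ k) := by
  classical
  have hex := sides_distinct hk hc hab.ne
  set m := Nat.find hex with hm
  have hdiff : ¬(((τ ^ m) a ≤ k) ↔ ((τ ^ m) b ≤ k)) := Nat.find_spec hex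
  have hmin : ∀ m' < m, (((τ ^ m') a ≤ k) ↔ ((τ ^ m') b ≤ k)) := fun m' h' =>
    not_not.mp (Nat.find_min hex h')
  have mono : ∀ m' ≤ m, (τ ^ m') a < (τ ^ m') b := by
    intro m' hle
    induction m' with
    | zero => simpa using hab
    | succ m' ih =>
      rw [pow_succ_apply, pow_succ_apply]
      exact sameSide_lt hk (ih (by omega)) (hmin m' (by omega))
  have hmm := mono m le_rfl
  refine ⟨m, hmin, ?_, ?_⟩
  · by_contra h
    have hbk : ¬((τ ^ m) b ≤ k) := fun hb => h (le_of_lt (lt_of_lt_of_le hmm hb))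
    exact hdiff ⟨fun ha => absurd ha h, fun hb => absurd hb hbk⟩
  · intro hb
    exact hdiff ⟨fun _ => hb, fun _ => le_of_lt (lt_of_lt_of_le hmm hb)⟩

lemma wd_primitive [NeZero n] (hk : descSet τ = {k}) (hc : IsNCycle τ) (r : Fin n) :
    Primitive (wd k τ r) := by
  intro e he hpe
  have key : ∀ m : ℕ, (((τ ^ m) ((τ ^ e) r) ≤ k) ↔ ((τ ^ m) r ≤ k)) := by
    intro m
    have h1 := hpe ((m : ℕ) : ZMod n)
    rw [wd_eq, wd_eq, orb_add_natCast hc, orb_natCast hc] at h1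
    have h2 : (τ ^ e) ((τ ^ m) r) = (τ ^ m) ((τ ^ e) r) := by
      rw [← Equiv.Perm.mul_apply, ← Equiv.Perm.mul_apply, ← pow_add, ← pow_add, add_comm]
    rw [h2] at h1
    constructor
    · intro hle
      by_contra hgt
      rw [not_le] at hgt
      simp [hgt, not_lt.mpr hle] at h1
    · intro hle
      by_contra hgt
      rw [not_le] at hgt
      simp [hgt, not_lt.mpr hle] at h1
  have hfix : (τ ^ e) r = r := by
    by_contra hne
    obtain ⟨m, hm⟩ := sides_distinct hk hc hne
    exact hm (key m)
  exact Nat.dvd_antisymm he ((pow_apply_eq_self_iff hc r e).mp hfix)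


def finLeEquiv (k : Fin n) : {v : Fin n // v ≤ k} ≃ Fin (k.val + 1) where
  toFun v := ⟨v.1.val, by have := v.2; rw [Fin.le_def] at this; omega⟩
  invFun m := ⟨⟨m.val, by have := m.isLt; have := k.isLt; omega⟩, by
    rw [Fin.le_def]; have := m.isLt; simpa using by omega⟩
  left_inv v := by ext; rfl
  right_inv m := by ext; rfl

lemma count_k [NeZero n] (hc : IsNCycle τ) (r : Fin n) :
    (Finset.univ.filter fun j : ZMod n => wd k τ r j = false).card = k.val + 1 := by
  classical
  have h1 : ∀ j : ZMod n, (wd k τ r j = false) ↔ orb τ r j ≤ k := by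
    intro j
    rw [wd_eq, decide_eq_false_iff_not, not_lt]
  rw [Finset.filter_congr (fun j _ => by rw [h1])]
  rw [← Fintype.card_subtype]
  have E : {x : ZMod n // orb τ r x ≤ k} ≃ Fin (k.val + 1) :=
    ((Equiv.ofBijective _ (orb_bijective hc r)).subtypeEquiv
      (fun j => Iff.rfl)).trans (finLeEquiv k)
  exact (Fintype.card_congr E).trans (Fintype.card_fin _)

lemma strictMono_le_self (f : Fin n → Fin n) (hf : StrictMono f) (a : Fin n) : a ≤ f a := by
  classical
  by_contra hlt
  rw [not_le] at hlt
  have hne : (Finset.univ.filter fun x : Fin n => f x < x).Nonempty :=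
    ⟨a, by simp [hlt]⟩
  set a0 := (Finset.univ.filter fun x : Fin n => f x < x).min' hne with ha0
  have h1 : f a0 < a0 := by
    have := (Finset.univ.filter fun x : Fin n => f x < x).min'_mem hne
    rw [Finset.mem_filter] at this
    exact this.2
  have h2 : f (f a0) < f a0 := hf h1
  have h3 : a0 ≤ f a0 := Finset.min'_le _ _ (by simp [h2])
  exact absurd h1 (not_lt.mpr h3)

lemma equiv_strictMono_eq_id (π : Equiv.Perm (Fin n)) (hπ : StrictMono π) (a : Fin n) :
    π a = a := by
  have hsymm : StrictMono (π.symm : Fin n → Fin n) := by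
    intro a b hab
    rcases lt_trichotomy (π.symm a) (π.symm b) with h | h | h
    · exact h
    · exfalso; have : a = b := by
        have := congrArg π h; simpa using this
      exact absurd this hab.ne
    · exfalso
      have := hπ h
      simp only [Equiv.apply_symm_apply] at this
      exact absurd hab (not_lt.mpr this.le)
  have h1 := strictMono_le_self π hπ a
  have h2 := strictMono_le_self _ hsymm (π a)
  rw [Equiv.symm_apply_apply] at h2
  exact le_antisymm h2 h1

lemma inj_aux [NeZero n] {r r' : Fin n} {τ' : Equiv.Perm (Fin n)} {k' : Fin n}
    (hc : IsNCycle τ) (hc' : IsNCycle τ')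
    (hk : descSet τ = {k}) (hk' : descSet τ' = {k'})
    (hw : wd k τ r = wd k' τ' r') : r = r' ∧ τ = τ' := by
  -- step 1 : k = k'
  have hkk : k = k' := by
    have h1 := count_k (k := k) hc r
    have h2 := count_k (k := k') hc' r'
    rw [hw] at h1
    rw [h1] at h2
    exact Fin.ext (by omega)
  subst hkk
  -- step 2
  set oE : ZMod n ≃ Fin n := Equiv.ofBijective _ (orb_bijective hc r) with hoE
  set oE' : ZMod n ≃ Fin n := Equiv.ofBijective _ (orb_bijective hc' r') with hoE'
  set π : Equiv.Perm (Fin n) := oE.symm.trans oE' with hπdef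
  have key : ∀ (a : Fin n) (m : ℕ), (((τ ^ m) a ≤ k) ↔ ((τ' ^ m) (π a) ≤ k)) := by
    intro a m
    have hja : orb τ r (oE.symm a) = a := oE.apply_symm_apply a
    have hja' : orb τ' r' (oE.symm a) = π a := rfl
    have h1 := congrFun hw (oE.symm a + (m : ℕ))
    rw [wd_eq, wd_eq, orb_add_natCast hc, orb_add_natCast hc', hja, hja'] at h1
    constructor
    · intro hle
      by_contra hgt
      rw [not_le] at hgt
      simp [hgt, not_lt.mpr hle] at h1
    · intro hle
      by_contra hgt
      rw [not_le] at hgt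
      simp [hgt, not_lt.mpr hle] at h1
  have hmono : StrictMono (π : Fin n → Fin n) := by
    intro a b hab
    obtain ⟨m₁, hmin₁, hA, hB⟩ := first_diff hk hc hab
    rcases lt_trichotomy (π a) (π b) with h | h | h
    · exact h
    · exfalso
      have := (key a m₁).mp hA
      rw [h] at this
      exact hB ((key b m₁).mpr this)
    · exfalso
      obtain ⟨m₂, hmin₂, hA₂, hB₂⟩ := first_diff hk' hc' h
      have hA₂' : (τ ^ m₂) b ≤ k := (key b m₂).mpr hA₂
      have hB₂' : ¬((τ ^ m₂) a ≤ k) := fun h' => hB₂ ((key a m₂).mp h')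
      rcases lt_trichotomy m₁ m₂ with hm | hm | hm
      · have := hmin₂ m₁ hm
        have h3 : ((τ ^ m₁) b ≤ k) ↔ ((τ ^ m₁) a ≤ k) := by
          constructor
          · intro hb; exact (key a m₁).mpr (this.mp ((key b m₁).mp hb))
          · intro ha; exact (key b m₁).mpr (this.mpr ((key a m₁).mp ha))
        exact hB (h3.mpr hA)
      · subst hm
        exact hB₂' hA
      · exact hB₂' ((hmin₁ m₂ hm).mpr hA₂')
  have hπ1 : ∀ a, π a = a := equiv_strictMono_eq_id π hmono
  have horb : ∀ j : ZMod n, orb τ r j = orb τ' r' j := by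
    intro j
    have : π (oE j) = oE' j := by
      show oE' (oE.symm (oE j)) = oE' j
      rw [Equiv.symm_apply_apply]
    rw [hπ1 (oE j)] at this
    exact this
  have hr : r = r' := by
    have h0 := horb 0
    show r = r'
    have e1 : orb τ r 0 = r := by
      show (τ ^ (ZMod.val (0 : ZMod n))) r = r
      rw [ZMod.val_zero, pow_zero]
      rfl
    have e2 : orb τ' r' 0 = r' := by
      show (τ' ^ (ZMod.val (0 : ZMod n))) r' = r'
      rw [ZMod.val_zero, pow_zero]
      rfl
    rw [e1, e2] at h0
    exact h0
  refine ⟨hr, Equiv.ext fun a => ?_⟩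
  have h1 : τ (orb τ r (oE.symm a)) = orb τ r (oE.symm a + (1 : ℕ)) := by
    rw [orb_add_natCast hc, pow_one]
  have h1' : τ' (orb τ' r' (oE.symm a)) = orb τ' r' (oE.symm a + (1 : ℕ)) := by
    rw [orb_add_natCast hc', pow_one]
  have h2 : orb τ r (oE.symm a) = a := oE.apply_symm_apply a
  have h3 : orb τ' r' (oE.symm a) = a := by rw [← horb]; exact h2
  calc τ a = τ (orb τ r (oE.symm a)) := by rw [h2]
    _ = orb τ r (oE.symm a + (1 : ℕ)) := h1
    _ = orb τ' r' (oE.symm a + (1 : ℕ)) := horb _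
    _ = τ' (orb τ' r' (oE.symm a)) := h1'.symm
    _ = τ' a := by rw [h3]

open Finset

noncomputable section Surj

open scoped Classical

/-- The infinite word read from position `j`. -/
def Xf (w : ZMod n → Bool) (j : ZMod n) : Lex (ℕ → Bool) :=
  toLex (fun m => w (j + (m : ℕ)))

lemma Xf_lt_iff {w : ZMod n → Bool} {i j : ZMod n} :
    Xf w i < Xf w j ↔ ∃ m, (∀ m', m' < m → w (i + (m' : ℕ)) = w (j + (m' : ℕ)))
      ∧ w (i + (m : ℕ)) = false ∧ w (j + (m : ℕ)) = true := by
  constructor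
  · rintro ⟨m, hmin, hm⟩
    refine ⟨m, hmin, ?_⟩
    simp only [Xf] at hm
    rcases Bool.lt_iff.mp hm with ⟨h1, h2⟩
    exact ⟨h1, h2⟩
  · rintro ⟨m, hmin, h1, h2⟩
    exact ⟨m, hmin, by simp [Xf, h1, h2]⟩

lemma Xf_injective [NeZero n] {w : ZMod n → Bool} (hw : Primitive w) (hn : 2 ≤ n) :
    Function.Injective (Xf w) := by
  intro i j h
  have hfun : ∀ m : ℕ, w (i + (m : ℕ)) = w (j + (m : ℕ)) := fun m =>
    congrFun (congrArg ofLex h) m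
  have hper : HasPeriod w ((j - i).val) := by
    intro jj
    have h1 := hfun ((jj - i).val)
    rw [cast_val_eq] at h1
    rw [cast_val_eq]
    calc w (jj + (j - i)) = w (j + (jj - i)) := by ring_nf
      _ = w (i + (jj - i)) := h1.symm
      _ = w jj := by ring_nf
  have hper2 : HasPeriod w (Nat.gcd ((j - i).val) n) := hasPeriod_gcd hper (hasPeriod_self w)
  have hgcd : Nat.gcd ((j - i).val) n = n := hw _ (Nat.gcd_dvd_right _ _) hper2
  have hdvd : n ∣ (j - i).val := by
    have h2 := Nat.gcd_dvd_left ((j - i).val) n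
    rwa [hgcd] at h2
  have hlt : (j - i).val < n := ZMod.val_lt _
  have : (j - i).val = 0 := by
    rcases Nat.eq_zero_of_dvd_of_lt hdvd (by omega) with h
    exact h
  have : j - i = 0 := by
    rwa [ZMod.val_eq_zero] at this
  exact (sub_eq_zero.mp this).symm


variable [NeZero n]

def rkN (w : ZMod n → Bool) (j : ZMod n) : ℕ :=
  (Finset.univ.filter fun i => Xf w i < Xf w j).card

lemma rkN_lt (w : ZMod n → Bool) (j : ZMod n) : rkN w j < n := by
  have hsub : (Finset.univ.filter fun i => Xf w i < Xf w j) ⊆ Finset.univ.erase j := by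
    intro i hi
    rw [Finset.mem_filter] at hi
    rw [Finset.mem_erase]
    exact ⟨fun h => absurd hi.2 (by rw [h]; exact lt_irrefl _), Finset.mem_univ i⟩
  have h1 := Finset.card_le_card hsub
  rw [Finset.card_erase_of_mem (Finset.mem_univ j), Finset.card_univ, ZMod.card] at h1
  have hn : 0 < n := Nat.pos_of_ne_zero (NeZero.ne n)
  rw [rkN]
  omega

def rk (w : ZMod n → Bool) (j : ZMod n) : Fin n := ⟨rkN w j, rkN_lt w j⟩

lemma rk_lt_of {w : ZMod n → Bool} {i j : ZMod n} (h : Xf w i < Xf w j) :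
    rk w i < rk w j := by
  rw [Fin.lt_def]
  apply Finset.card_lt_card
  rw [Finset.ssubset_iff_of_subset]
  · exact ⟨i, by simp [h], by simp; exact lt_irrefl _⟩
  · intro x hx
    rw [Finset.mem_filter] at hx ⊢
    exact ⟨hx.1, hx.2.trans h⟩

lemma rk_injective {w : ZMod n → Bool} (hinj : Function.Injective (Xf w)) :
    Function.Injective (rk w) := by
  intro i j h
  by_contra hne
  have : Xf w i ≠ Xf w j := fun he => hne (hinj he)
  rcases this.lt_or_gt with h' | h'
  · exact absurd h (rk_lt_of h').ne
  · exact absurd h.symm (rk_lt_of h').ne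

lemma rk_bijective {w : ZMod n → Bool} (hinj : Function.Injective (Xf w)) :
    Function.Bijective (rk w) := by
  rw [Fintype.bijective_iff_injective_and_card]
  exact ⟨rk_injective hinj, by rw [ZMod.card, Fintype.card_fin]⟩

lemma rk_reflect {w : ZMod n → Bool} (hinj : Function.Injective (Xf w)) {i j : ZMod n}
    (h : rk w i < rk w j) : Xf w i < Xf w j := by
  rcases lt_trichotomy (Xf w i) (Xf w j) with h' | h' | h'
  · exact h'
  · exact absurd (hinj h') (by intro he; subst he; exact absurd h (lt_irrefl _))
  · exact absurd (rk_lt_of h') (not_lt.mpr h.le)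

/-- The rank equivalence. -/
def rkE {w : ZMod n → Bool} (hinj : Function.Injective (Xf w)) : ZMod n ≃ Fin n :=
  Equiv.ofBijective _ (rk_bijective hinj)

/-- The permutation induced by the shift, transported along ranks. -/
def τw {w : ZMod n → Bool} (hinj : Function.Injective (Xf w)) : Equiv.Perm (Fin n) :=
  (rkE hinj).symm.trans ((Equiv.addRight (1 : ZMod n)).trans (rkE hinj))

lemma τw_apply {w : ZMod n → Bool} (hinj : Function.Injective (Xf w)) (a : Fin n) :
    τw hinj a = rk w ((rkE hinj).symm a + 1) := rfl

lemma rkE_apply {w : ZMod n → Bool} (hinj : Function.Injective (Xf w)) (j : ZMod n) :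
    rkE hinj j = rk w j := rfl

lemma τw_pow {w : ZMod n → Bool} (hinj : Function.Injective (Xf w)) (m : ℕ) (a : Fin n) :
    ((τw hinj) ^ m) a = rk w ((rkE hinj).symm a + (m : ℕ)) := by
  induction m with
  | zero =>
    simp only [pow_zero, Nat.cast_zero, add_zero]
    show a = rkE hinj ((rkE hinj).symm a)
    rw [Equiv.apply_symm_apply]
  | succ m ih =>
    rw [pow_succ_apply, ih, τw_apply]
    have : (rkE hinj).symm (rk w ((rkE hinj).symm a + (m : ℕ)))
        = (rkE hinj).symm a + (m : ℕ) := (rkE hinj).symm_apply_apply _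
    rw [this]
    push_cast
    ring_nf

lemma τw_isNCycle {w : ZMod n → Bool} (hinj : Function.Injective (Xf w)) :
    IsNCycle (τw hinj) := by
  constructor
  · exact ⟨Set.mapsTo_univ _ _, (τw hinj).injective.injOn,
      fun x _ => ⟨(τw hinj).symm x, trivial, (τw hinj).apply_symm_apply x⟩⟩
  · intro a _ b _
    refine ⟨(((rkE hinj).symm b - (rkE hinj).symm a).val : ℤ), ?_⟩
    rw [zpow_natCast, τw_pow, cast_val_eq]
    show rkE hinj _ = b
    rw [add_sub_cancel, Equiv.apply_symm_apply]


section K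
variable {w : ZMod n → Bool} (hw : Primitive w) (hn : 2 ≤ n)

def zCount (w : ZMod n → Bool) : ℕ := (Finset.univ.filter fun j => w j = false).card

include hw hn in
lemma zCount_pos : 0 < zCount w := by
  rcases Nat.eq_zero_or_pos (zCount w) with h0 | h
  · exfalso
    have hall : ∀ j : ZMod n, w j = true := by
      intro j
      rw [zCount, Finset.card_eq_zero] at h0
      have := Finset.filter_eq_empty_iff.mp h0 (Finset.mem_univ j)
      simpa using this
    have hper : HasPeriod w 1 := fun j => by rw [hall, hall]
    have := hw 1 (one_dvd n) hper
    omega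
  · exact h

include hw hn in
lemma zCount_lt : zCount w < n := by
  have hle : zCount w ≤ n := by
    have := Finset.card_filter_le (Finset.univ : Finset (ZMod n)) (fun j => w j = false)
    rwa [Finset.card_univ, ZMod.card] at this
  rcases eq_or_lt_of_le hle with h0 | h
  · exfalso
    have huniv : (Finset.univ.filter fun j => w j = false) = Finset.univ := by
      apply Finset.eq_univ_of_card
      show zCount w = _
      rw [h0]
      exact (ZMod.card n).symm
    have hall : ∀ j : ZMod n, w j = false := by
      intro j
      have := huniv ▸ Finset.mem_univ j
      rw [Finset.mem_filter] at this
      exact this.2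
    have hper : HasPeriod w 1 := fun j => by rw [hall, hall]
    have := hw 1 (one_dvd n) hper
    omega
  · exact h

/-- The descent position. -/
def kw (hw : Primitive w) (hn : 2 ≤ n) : Fin n :=
  ⟨zCount w - 1, by have := zCount_lt hw hn; omega⟩

lemma head_lt {i j : ZMod n} (hi : w i = false) (hj : w j = true) : Xf w i < Xf w j := by
  rw [Xf_lt_iff]
  exact ⟨0, fun m' hm' => absurd hm' (Nat.not_lt_zero _), by simpa using hi, by simpa using hj⟩

lemma tail_lt {p q : ZMod n} (hpq : Xf w p < Xf w q) (hhead : w p = w q) :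
    Xf w (p + 1) < Xf w (q + 1) := by
  rw [Xf_lt_iff] at hpq ⊢
  obtain ⟨m, hmin, h1, h2⟩ := hpq
  cases m with
  | zero =>
    exfalso
    simp only [Nat.cast_zero, add_zero] at h1 h2
    rw [hhead, h2] at h1
    exact absurd h1 (by simp)
  | succ m' =>
    have harith : ∀ (x : ZMod n) (j' : ℕ), x + 1 + (j' : ℕ) = x + ((j' + 1 : ℕ) : ZMod n) := by
      intro x j'
      push_cast
      ring
    refine ⟨m', fun j' hj' => ?_, ?_, ?_⟩
    · rw [harith, harith]
      exact hmin (j' + 1) (by omega)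
    · rw [harith]; exact h1
    · rw [harith]; exact h2

include hw hn in
lemma false_iff_rk_le {j : ZMod n} : w j = false ↔ rk w j ≤ kw hw hn := by
  have hzpos := zCount_pos hw hn
  constructor
  · intro hj
    have hsub : (Finset.univ.filter fun i => Xf w i < Xf w j)
        ⊆ (Finset.univ.filter fun i => w i = false).erase j := by
      intro i hi
      rw [Finset.mem_filter] at hi
      rw [Finset.mem_erase, Finset.mem_filter]
      have hfalse : w i = false := by
        by_contra htrue
        rw [Bool.not_eq_false] at htrue
        exact absurd (hi.2.trans (head_lt hj htrue)) (lt_irrefl _)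
      refine ⟨fun he => ?_, Finset.mem_univ i, hfalse⟩
      subst he
      exact absurd hi.2 (lt_irrefl _)
    have h1 := Finset.card_le_card hsub
    rw [Finset.card_erase_of_mem (by rw [Finset.mem_filter]; exact ⟨Finset.mem_univ j, hj⟩)] at h1
    rw [Fin.le_def]
    show rkN w j ≤ zCount w - 1
    exact h1
  · intro hle
    by_contra hne
    rw [Bool.not_eq_false] at hne
    have hsub : (Finset.univ.filter fun i => w i = false)
        ⊆ (Finset.univ.filter fun i => Xf w i < Xf w j) := by
      intro i hi
      rw [Finset.mem_filter] at hi ⊢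
      exact ⟨hi.1, head_lt hi.2 hne⟩
    have h1 := Finset.card_le_card hsub
    rw [Fin.le_def] at hle
    show False
    have h2 : zCount w ≤ rkN w j := h1
    have : rkN w j ≤ zCount w - 1 := hle
    omega

include hw hn in
lemma adj_lt_aux (hinj : Function.Injective (Xf w)) (i : Fin n) (hi : (i : ℕ) + 1 < n)
    (hik : i ≠ kw hw hn) : τw hinj i < τw hinj ⟨(i : ℕ) + 1, hi⟩ := by
  set p := (rkE hinj).symm i with hp
  set q := (rkE hinj).symm ⟨(i : ℕ) + 1, hi⟩ with hq
  have hrp : rk w p = i := (rkE hinj).apply_symm_apply i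
  have hrq : rk w q = ⟨(i : ℕ) + 1, hi⟩ := (rkE hinj).apply_symm_apply _
  have hXpq : Xf w p < Xf w q := by
    apply rk_reflect hinj
    rw [hrp, hrq, Fin.lt_def]
    simp
  have hweq : w p = w q := by
    rcases Nat.lt_or_ge (i : ℕ) ((kw hw hn) : ℕ) with hlt | hge
    · have h1 : rk w p ≤ kw hw hn := by rw [hrp, Fin.le_def]; omega
      have h2 : rk w q ≤ kw hw hn := by rw [hrq, Fin.le_def]; simp; omega
      rw [(false_iff_rk_le hw hn).mpr h1, (false_iff_rk_le hw hn).mpr h2]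
    · have hik' : ((kw hw hn) : ℕ) < (i : ℕ) := by
        rcases Nat.eq_or_lt_of_le hge with he | hlt'
        · exact absurd (Fin.ext he.symm) hik
        · omega
      have h1 : ¬(rk w p ≤ kw hw hn) := by rw [hrp, Fin.le_def]; omega
      have h2 : ¬(rk w q ≤ kw hw hn) := by rw [hrq, Fin.le_def]; simp; omega
      have e1 : w p = true := by
        by_contra he
        rw [Bool.not_eq_true] at he
        exact h1 ((false_iff_rk_le hw hn).mp he)
      have e2 : w q = true := by
        by_contra he
        rw [Bool.not_eq_true] at he
        exact h2 ((false_iff_rk_le hw hn).mp he)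
      rw [e1, e2]
  have htail := rk_lt_of (tail_lt hXpq hweq)
  rw [τw_apply, τw_apply]
  exact htail

include hw hn in
lemma one_ne_zero_zmod : (1 : ZMod n) ≠ 0 := by
  intro h
  have : ((1 : ℕ) : ZMod n) = 0 := by simpa using h
  have h2 := (ZMod.natCast_eq_zero_iff 1 n).mp this
  have := Nat.le_of_dvd one_pos h2
  omega

include hw hn in
lemma τw_not_id (hinj : Function.Injective (Xf w)) :
    ¬(∀ a, τw hinj a = a) := by
  intro hall
  have h1 : τw hinj (rkE hinj (0 : ZMod n)) = rk w (0 + 1) := by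
    rw [τw_apply, (rkE hinj).symm_apply_apply]
  rw [hall, rkE_apply] at h1
  have h2 : (0 : ZMod n) = 0 + 1 := rk_injective hinj h1
  rw [zero_add] at h2
  exact one_ne_zero_zmod hw hn h2.symm

lemma kw_succ_lt : ((kw hw hn) : ℕ) + 1 < n := by
  have h1 := zCount_pos hw hn
  have h2 := zCount_lt hw hn
  show zCount w - 1 + 1 < n
  omega

include hw hn in
lemma desc_at_k (hinj : Function.Injective (Xf w)) :
    τw hinj ⟨((kw hw hn) : ℕ) + 1, kw_succ_lt hw hn⟩ < τw hinj (kw hw hn) := by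
  by_contra hnot
  rw [not_lt] at hnot
  have hne : τw hinj (kw hw hn) ≠ τw hinj ⟨((kw hw hn) : ℕ) + 1, kw_succ_lt hw hn⟩ := by
    intro he
    have := (τw hinj).injective he
    rw [Fin.ext_iff] at this
    simp at this
  have hlt : τw hinj (kw hw hn) < τw hinj ⟨((kw hw hn) : ℕ) + 1, kw_succ_lt hw hn⟩ :=
    lt_of_le_of_ne hnot hne
  have hsm : StrictMono (τw hinj : Fin n → Fin n) := by
    intro a b hab
    apply fin_chain (τw hinj) hab
    intro i hi _ _
    by_cases hik : i = kw hw hn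
    · subst hik
      exact hlt
    · exact adj_lt_aux hw hn hinj i hi hik
  exact τw_not_id hw hn hinj (equiv_strictMono_eq_id _ hsm)

include hw hn in
lemma descSet_τw (hinj : Function.Injective (Xf w)) :
    descSet (τw hinj) = {kw hw hn} := by
  ext i
  rw [descSet, Finset.mem_filter, Finset.mem_singleton]
  constructor
  · rintro ⟨-, j, hj, hlt⟩
    have hi : (i : ℕ) + 1 < n := hj ▸ j.isLt
    have hjeq : j = ⟨(i : ℕ) + 1, hi⟩ := Fin.ext hj
    subst hjeq
    by_contra hik
    exact absurd hlt (not_lt.mpr (adj_lt_aux hw hn hinj i hi hik).le)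
  · intro hik
    subst hik
    exact ⟨Finset.mem_univ _, ⟨⟨_ + 1, kw_succ_lt hw hn⟩, by simp, desc_at_k hw hn hinj⟩⟩

include hw hn in
lemma wd_τw (hinj : Function.Injective (Xf w)) :
    wd (kw hw hn) (τw hinj) (rk w 0) = w := by
  funext j
  show decide (kw hw hn < ((τw hinj) ^ j.val) (rk w 0)) = w j
  have h1 : ((τw hinj) ^ j.val) (rk w 0) = rk w j := by
    rw [τw_pow]
    have h2 : (rkE hinj).symm (rk w 0) = 0 := (rkE hinj).symm_apply_apply 0
    rw [h2, zero_add, cast_val_eq]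
  rw [h1]
  cases hj : w j with
  | false =>
    have := (false_iff_rk_le hw hn).mp hj
    simpa using not_lt.mpr this
  | true =>
    have : ¬(rk w j ≤ kw hw hn) := fun h => by
      rw [(false_iff_rk_le hw hn).mpr h] at hj
      exact Bool.false_ne_true hj
    simpa using not_le.mp this

end K

end Surj


noncomputable def kOf {τ : Equiv.Perm (Fin n)} (hd : (descSet τ).card = 1) : Fin n :=
  (descSet τ).min' (Finset.card_pos.mp (by omega))

lemma descSet_eq_kOf {τ : Equiv.Perm (Fin n)} (hd : (descSet τ).card = 1) :
    descSet τ = {kOf hd} := by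
  obtain ⟨a, ha⟩ := Finset.card_eq_one.mp hd
  have h2 : kOf hd ∈ descSet τ := Finset.min'_mem _ _
  rw [ha] at h2 ⊢
  rw [Finset.mem_singleton] at h2
  rw [h2]

theorem level_card (hn : 2 ≤ n) :
    Nat.card {u : ZMod n → Bool // Primitive u} =
      n * Nat.card {σ : Equiv.Perm (Fin n) // IsNCycle σ ∧ (descSet σ).card = 1} := by
  classical
  haveI : NeZero n := ⟨by omega⟩
  set C := {σ : Equiv.Perm (Fin n) // IsNCycle σ ∧ (descSet σ).card = 1} with hC
  let Φ : Fin n × C → {u : ZMod n → Bool // Primitive u} :=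
    fun p => ⟨wd (kOf p.2.2.2) p.2.1 p.1,
      wd_primitive (descSet_eq_kOf p.2.2.2) p.2.2.1 p.1⟩
  have hbij : Function.Bijective Φ := by
    constructor
    · rintro ⟨r, σ, hσ⟩ ⟨r', σ', hσ'⟩ heq
      simp only [Φ, Subtype.mk.injEq] at heq
      obtain ⟨hr, hσeq⟩ :=
        inj_aux hσ.1 hσ'.1 (descSet_eq_kOf hσ.2) (descSet_eq_kOf hσ'.2) heq
      exact Prod.ext hr (Subtype.ext hσeq)
    · rintro ⟨w, hw⟩
      have hinj := Xf_injective hw hn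
      have hcard : (descSet (τw hinj)).card = 1 := by
        rw [descSet_τw hw hn hinj]
        exact Finset.card_singleton _
      refine ⟨⟨rk w 0, ⟨τw hinj, τw_isNCycle hinj, hcard⟩⟩, ?_⟩
      apply Subtype.ext
      show wd (kOf hcard) (τw hinj) (rk w 0) = w
      have hk : kOf hcard = kw hw hn := by
        have h1 := descSet_eq_kOf hcard
        rw [descSet_τw hw hn hinj] at h1
        exact (Finset.singleton_injective h1).symm
      rw [hk]
      exact wd_τw hw hn hinj
  calc Nat.card {u : ZMod n → Bool // Primitive u}
      = Nat.card (Fin n × C) := (Nat.card_eq_of_bijective Φ hbij).symm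
    _ = n * Nat.card C := by rw [Nat.card_prod, Nat.card_eq_fintype_card, Fintype.card_fin]

end LevelSection

/-- The counting function. -/
noncomputable def F (d : ℕ) : ℤ :=
  if h : d = 0 then 0 else
    haveI : NeZero d := ⟨h⟩
    (Nat.card {u : ZMod d → Bool // Primitive u} : ℤ)

lemma F_forward : ∀ m : ℕ, 0 < m → ∑ d ∈ m.divisors, F d = (2 : ℤ) ^ m := by
  intro m hm
  have hs := sum_card m hm.ne'
  calc ∑ d ∈ m.divisors, F d
      = ∑ d ∈ m.divisors,
          ((Nat.card {u : ZMod d → Bool // Primitive u} : ℤ)) := by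
        apply Finset.sum_congr rfl
        intro d hd
        have hd0 : d ≠ 0 := (Nat.pos_of_mem_divisors hd).ne'
        rw [F, dif_neg hd0]
    _ = ((∑ d ∈ m.divisors, Nat.card {u : ZMod d → Bool // Primitive u} : ℕ) : ℤ) := by
        push_cast
        rfl
    _ = ((2 ^ m : ℕ) : ℤ) := by rw [hs]
    _ = (2 : ℤ) ^ m := by push_cast; rfl

end Neck

theorem stmt9 (n : ℕ) (hn : 2 ≤ n) :
    (n : ℤ) * Nat.card {τ : Equiv.Perm (Fin n) // IsNCycle τ ∧ (descSet τ).card = 1} =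
      ∑ d ∈ n.divisors, (ArithmeticFunction.moebius d) * 2 ^ (n / d) := by
  classical
  have hn0 : n ≠ 0 := by omega
  haveI : NeZero n := ⟨hn0⟩
  have hinv := (ArithmeticFunction.sum_eq_iff_sum_smul_moebius_eq
    (f := Neck.F) (g := fun m => (2 : ℤ) ^ m)).mp Neck.F_forward n (by omega)
  have hF : Neck.F n =
      (n : ℤ) * Nat.card {τ : Equiv.Perm (Fin n) // IsNCycle τ ∧ (descSet τ).card = 1} := by
    rw [Neck.F, dif_neg hn0, Neck.level_card hn]
    push_cast
    ring
  rw [← hF, ← hinv]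
  rw [← Nat.sum_divisorsAntidiagonal
    (f := fun d e => ((ArithmeticFunction.moebius d : ℤ)) * 2 ^ e)]
  apply Finset.sum_congr rfl
  intro x hx
  rw [zsmul_eq_mul]
  simp
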